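/- For c > 0, the function h(x) = c³/(4x·√(π x³)) · e^{-c²/(4x)} on (0,∞) is a probability density, and its Laplace transform is ∫₀^∞ e^{-ηx} h(x) dx = e^{-c√η}(1 + c√η) = Γ(2, c√η)/Γ(2) for all η > 0. -/

import Mathlib

open MeasureTheory Real Filter Topology Set


noncomputable def myErf (t : ℝ) : ℝ := 2 / Real.sqrt π * ∫ u in (0:ℝ)..t, Real.exp (-u ^ 2)

lemma cont_gauss : Continuous fun u : ℝ => Real.exp (-u ^ 2) := by continuity

lemma myErf_hasDerivAt (t : ℝ) :
    HasDerivAt myErf (2 / Real.sqrt π * Real.exp (-t ^ 2)) t := by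
  have h : HasDerivAt (fun t : ℝ => ∫ u in (0:ℝ)..t, Real.exp (-u ^ 2)) (Real.exp (-t ^ 2)) t :=
    intervalIntegral.integral_hasDerivAt_right
      (cont_gauss.intervalIntegrable 0 t)
      (cont_gauss.aestronglyMeasurable.stronglyMeasurableAtFilter)
      cont_gauss.continuousAt
  exact h.const_mul _

lemma integrableOn_gauss : IntegrableOn (fun u : ℝ => Real.exp (-u ^ 2)) (Ioi 0) := by
  have := (integrable_exp_neg_mul_sq (b := (1:ℝ)) one_pos)
  simpa using this.integrableOn

lemma sqrt_pi_pos : 0 < Real.sqrt π := Real.sqrt_pos.2 Real.pi_pos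

lemma myErf_tendsto_atTop : Tendsto myErf atTop (𝓝 1) := by
  have h := intervalIntegral_tendsto_integral_Ioi 0 integrableOn_gauss tendsto_id
  have hval : (∫ u in Ioi (0:ℝ), Real.exp (-u ^ 2)) = Real.sqrt π / 2 := by
    have := integral_gaussian_Ioi 1
    simpa using this
  rw [hval] at h
  have := h.const_mul (2 / Real.sqrt π)
  have heq : 2 / Real.sqrt π * (Real.sqrt π / 2) = 1 := by
    field_simp
  show Tendsto (fun t => 2 / Real.sqrt π * ∫ u in (0:ℝ)..t, Real.exp (-u ^ 2)) atTop (𝓝 1)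
  simpa [heq] using this

lemma myErf_neg (t : ℝ) : myErf (-t) = -myErf t := by
  unfold myErf
  rw [← mul_neg]
  congr 1
  rw [intervalIntegral.integral_symm]
  have : (∫ u in (-t)..(0:ℝ), Real.exp (-u ^ 2)) = ∫ u in (0:ℝ)..t, Real.exp (-(-u) ^ 2) := by
    rw [intervalIntegral.integral_comp_neg fun u => Real.exp (-u ^ 2)]
    norm_num
  simp only [neg_neg, neg_sq] at this ⊢
  rw [this]

lemma myErf_tendsto_atBot : Tendsto myErf atBot (𝓝 (-1)) := by
  have h : Tendsto (fun t : ℝ => -myErf (-t)) atBot (𝓝 (-1)) := by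
    have := (myErf_tendsto_atTop.comp tendsto_neg_atBot_atTop).neg
    simpa using this
  refine h.congr fun t => ?_
  rw [myErf_neg, neg_neg]

noncomputable def FF (a b x : ℝ) : ℝ :=
  2 * Real.sqrt b / Real.sqrt π * (Real.exp (-(a * x + b / x)) / Real.sqrt x)
  + (Real.sqrt a * Real.sqrt b - 1 / 2) * Real.exp (2 * (Real.sqrt a * Real.sqrt b)) *
      myErf (Real.sqrt a * Real.sqrt x + Real.sqrt b / Real.sqrt x)
  + (Real.sqrt a * Real.sqrt b + 1 / 2) * Real.exp (-(2 * (Real.sqrt a * Real.sqrt b))) *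
      myErf (Real.sqrt a * Real.sqrt x - Real.sqrt b / Real.sqrt x)

lemma FF_hasDerivAt {a b x : ℝ} (ha : 0 ≤ a) (hb : 0 ≤ b) (hx : 0 < x) :
    HasDerivAt (FF a b)
      (2 * b * Real.sqrt b / Real.sqrt π *
        (Real.exp (-(a * x + b / x)) / (x ^ 2 * Real.sqrt x))) x := by
  have hx0 : x ≠ 0 := hx.ne'
  have hs : 0 < Real.sqrt x := Real.sqrt_pos.2 hx
  have hs0 : Real.sqrt x ≠ 0 := hs.ne'
  have hsq : Real.sqrt x ^ 2 = x := Real.sq_sqrt hx.le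
  have hsa : Real.sqrt a ^ 2 = a := Real.sq_sqrt ha
  have hsb : Real.sqrt b ^ 2 = b := Real.sq_sqrt hb
  have hds : HasDerivAt Real.sqrt (1 / (2 * Real.sqrt x)) x := Real.hasDerivAt_sqrt hx0
  -- inner exponent
  have hE : HasDerivAt (fun y : ℝ => Real.exp (-(a * y + b / y)))
      (Real.exp (-(a * x + b / x)) * (-(a * 1 + b * (-(x ^ 2)⁻¹)))) x := by
    have h1 : HasDerivAt (fun y : ℝ => a * y + b / y) (a * 1 + b * (-(x ^ 2)⁻¹)) x := by
      have := ((hasDerivAt_id x).const_mul a).fun_add ((hasDerivAt_inv hx0).const_mul b)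
      simpa [div_eq_mul_inv] using this
    simpa using h1.neg.exp
  have hT1 : HasDerivAt (fun y : ℝ =>
      2 * Real.sqrt b / Real.sqrt π * (Real.exp (-(a * y + b / y)) / Real.sqrt y))
      (2 * Real.sqrt b / Real.sqrt π *
        ((Real.exp (-(a * x + b / x)) * (-(a * 1 + b * (-(x ^ 2)⁻¹))) * Real.sqrt x
          - Real.exp (-(a * x + b / x)) * (1 / (2 * Real.sqrt x))) / Real.sqrt x ^ 2)) x :=
    (hE.div hds hs0).const_mul _
  -- u plus
  have hup : HasDerivAt (fun y : ℝ => Real.sqrt a * Real.sqrt y + Real.sqrt b / Real.sqrt y)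
      (Real.sqrt a * (1 / (2 * Real.sqrt x))
        + Real.sqrt b * (-(1 / (2 * Real.sqrt x)) / Real.sqrt x ^ 2)) x := by
    have := (hds.const_mul (Real.sqrt a)).fun_add ((hds.inv hs0).const_mul (Real.sqrt b))
    simpa [div_eq_mul_inv] using this
  have hum : HasDerivAt (fun y : ℝ => Real.sqrt a * Real.sqrt y - Real.sqrt b / Real.sqrt y)
      (Real.sqrt a * (1 / (2 * Real.sqrt x))
        - Real.sqrt b * (-(1 / (2 * Real.sqrt x)) / Real.sqrt x ^ 2)) x := by
    have := (hds.const_mul (Real.sqrt a)).fun_sub ((hds.inv hs0).const_mul (Real.sqrt b))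
    simpa [div_eq_mul_inv] using this
  have herfp : HasDerivAt (fun y : ℝ => myErf (Real.sqrt a * Real.sqrt y + Real.sqrt b / Real.sqrt y))
      ((2 / Real.sqrt π * Real.exp (-(Real.sqrt a * Real.sqrt x + Real.sqrt b / Real.sqrt x) ^ 2)) *
        (Real.sqrt a * (1 / (2 * Real.sqrt x))
          + Real.sqrt b * (-(1 / (2 * Real.sqrt x)) / Real.sqrt x ^ 2))) x :=
    (myErf_hasDerivAt _).comp x hup
  have herfm : HasDerivAt (fun y : ℝ => myErf (Real.sqrt a * Real.sqrt y - Real.sqrt b / Real.sqrt y))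
      ((2 / Real.sqrt π * Real.exp (-(Real.sqrt a * Real.sqrt x - Real.sqrt b / Real.sqrt x) ^ 2)) *
        (Real.sqrt a * (1 / (2 * Real.sqrt x))
          - Real.sqrt b * (-(1 / (2 * Real.sqrt x)) / Real.sqrt x ^ 2))) x :=
    (myErf_hasDerivAt _).comp x hum
  have total := ((hT1.fun_add (herfp.const_mul ((Real.sqrt a * Real.sqrt b - 1 / 2) *
      Real.exp (2 * (Real.sqrt a * Real.sqrt b))))).fun_add
    (herfm.const_mul ((Real.sqrt a * Real.sqrt b + 1 / 2) *
      Real.exp (-(2 * (Real.sqrt a * Real.sqrt b))))))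
  have eP : Real.exp (-(Real.sqrt a * Real.sqrt x + Real.sqrt b / Real.sqrt x) ^ 2)
      = Real.exp (-(2 * (Real.sqrt a * Real.sqrt b))) * Real.exp (-(a * x + b / x)) := by
    rw [← Real.exp_add]
    congr 1
    have h1 : (Real.sqrt a * Real.sqrt x) ^ 2 = a * x := by rw [mul_pow, hsa, hsq]
    have h2 : (Real.sqrt b / Real.sqrt x) ^ 2 = b / x := by rw [div_pow, hsb, hsq]
    have h3 : Real.sqrt a * Real.sqrt x * (Real.sqrt b / Real.sqrt x) = Real.sqrt a * Real.sqrt b := by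
      field_simp; try ring
    have h4 : (Real.sqrt a * Real.sqrt x + Real.sqrt b / Real.sqrt x) ^ 2
        = a * x + b / x + 2 * (Real.sqrt a * Real.sqrt b) := by
      rw [add_sq, h1, h2]; linear_combination 2 * h3
    linear_combination -h4
  have eM : Real.exp (-(Real.sqrt a * Real.sqrt x - Real.sqrt b / Real.sqrt x) ^ 2)
      = Real.exp (2 * (Real.sqrt a * Real.sqrt b)) * Real.exp (-(a * x + b / x)) := by
    rw [← Real.exp_add]
    congr 1
    have h1 : (Real.sqrt a * Real.sqrt x) ^ 2 = a * x := by rw [mul_pow, hsa, hsq]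
    have h2 : (Real.sqrt b / Real.sqrt x) ^ 2 = b / x := by rw [div_pow, hsb, hsq]
    have h3 : Real.sqrt a * Real.sqrt x * (Real.sqrt b / Real.sqrt x) = Real.sqrt a * Real.sqrt b := by
      field_simp; try ring
    have h4 : (Real.sqrt a * Real.sqrt x - Real.sqrt b / Real.sqrt x) ^ 2
        = a * x + b / x - 2 * (Real.sqrt a * Real.sqrt b) := by
      rw [sub_sq, h1, h2]; linear_combination -2 * h3
    linear_combination -h4
  have hπ : Real.sqrt π ≠ 0 := sqrt_pi_pos.ne'
  have hek : Real.exp (-(2 * (Real.sqrt a * Real.sqrt b))) * Real.exp (2 * (Real.sqrt a * Real.sqrt b)) = 1 := by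
    rw [← Real.exp_add]; simp
  unfold FF
  convert total using 1
  case e'_4 => rfl
  case e'_5 => rfl
  rw [eP, eM]
  set E := Real.exp (-(a * x + b / x)) with hE'
  set s := Real.sqrt x with hs'
  set sa := Real.sqrt a with hsa'
  set sb := Real.sqrt b with hsb'
  set ep := Real.exp (2 * (sa * sb)) with hep'
  set em := Real.exp (-(2 * (sa * sb))) with hem'
  rw [← hsq, ← hsa, ← hsb]
  field_simp
  ring_nf
  linear_combination (-(sb * E * s ^ 2 * 2 + sb * E * s ^ 4 * sa ^ 2 * 4)) * hek

lemma myErf_zero : myErf 0 = 0 := by simp [myErf]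

lemma sqrt_tendsto_atTop : Tendsto Real.sqrt atTop atTop := by
  have := tendsto_rpow_atTop (by norm_num : (0:ℝ) < 1/2)
  refine this.congr' ?_
  filter_upwards [eventually_ge_atTop (0:ℝ)] with x hx
  exact (Real.sqrt_eq_rpow x).symm

lemma T1_tendsto_atTop {a b : ℝ} (ha : 0 ≤ a) (hb : 0 ≤ b) :
    Tendsto (fun x : ℝ => Real.exp (-(a * x + b / x)) / Real.sqrt x) atTop (𝓝 0) := by
  have h1 : Tendsto (fun x : ℝ => 1 / Real.sqrt x) atTop (𝓝 0) := by
    simpa [one_div, Pi.inv_def] using sqrt_tendsto_atTop.inv_tendsto_atTop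
  refine squeeze_zero' ?_ ?_ h1
  · filter_upwards [eventually_gt_atTop (0:ℝ)] with x hx
    positivity
  · filter_upwards [eventually_gt_atTop (0:ℝ)] with x hx
    rw [div_le_div_iff_of_pos_right (Real.sqrt_pos.2 hx)]  -- guess name
    exact Real.exp_le_one_iff.2 (by positivity |> neg_nonpos_of_nonneg)

lemma FF_tendsto_atTop {a b : ℝ} (ha : 0 < a) (hb : 0 < b) :
    Tendsto (FF a b) atTop
      (𝓝 ((Real.sqrt a * Real.sqrt b - 1 / 2) * Real.exp (2 * (Real.sqrt a * Real.sqrt b))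
        + (Real.sqrt a * Real.sqrt b + 1 / 2) * Real.exp (-(2 * (Real.sqrt a * Real.sqrt b))))) := by
  have hsb0 : Tendsto (fun x : ℝ => Real.sqrt b / Real.sqrt x) atTop (𝓝 0) := by
    have := sqrt_tendsto_atTop.inv_tendsto_atTop.const_mul (Real.sqrt b)
    simpa [div_eq_mul_inv] using this
  have hup : Tendsto (fun x : ℝ => Real.sqrt a * Real.sqrt x + Real.sqrt b / Real.sqrt x) atTop atTop := by
    have h1 : Tendsto (fun x : ℝ => Real.sqrt a * Real.sqrt x) atTop atTop :=
      sqrt_tendsto_atTop.const_mul_atTop (Real.sqrt_pos.2 ha)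
    exact h1.atTop_add hsb0
  have hum : Tendsto (fun x : ℝ => Real.sqrt a * Real.sqrt x - Real.sqrt b / Real.sqrt x) atTop atTop := by
    have h1 : Tendsto (fun x : ℝ => Real.sqrt a * Real.sqrt x) atTop atTop :=
      sqrt_tendsto_atTop.const_mul_atTop (Real.sqrt_pos.2 ha)
    have := h1.atTop_add hsb0.neg
    refine this.congr fun x => ?_
    ring
  have l1 := (T1_tendsto_atTop ha.le hb.le).const_mul (2 * Real.sqrt b / Real.sqrt π)
  have l2 := (myErf_tendsto_atTop.comp hup).const_mul
    ((Real.sqrt a * Real.sqrt b - 1 / 2) * Real.exp (2 * (Real.sqrt a * Real.sqrt b)))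
  have l3 := (myErf_tendsto_atTop.comp hum).const_mul
    ((Real.sqrt a * Real.sqrt b + 1 / 2) * Real.exp (-(2 * (Real.sqrt a * Real.sqrt b))))
  have := (l1.add l2).add l3
  unfold FF
  convert this using 2 <;> simp only [Function.comp_apply, mul_one, mul_zero, zero_add] <;> ring

lemma FF0_tendsto_atTop {b : ℝ} (hb : 0 ≤ b) :
    Tendsto (FF 0 b) atTop (𝓝 0) := by
  have hsb0 : Tendsto (fun x : ℝ => Real.sqrt b / Real.sqrt x) atTop (𝓝 0) := by
    have := sqrt_tendsto_atTop.inv_tendsto_atTop.const_mul (Real.sqrt b)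
    simpa [div_eq_mul_inv] using this
  have herfc : ContinuousAt myErf 0 := (myErf_hasDerivAt 0).continuousAt
  have l1 := (T1_tendsto_atTop le_rfl hb).const_mul (2 * Real.sqrt b / Real.sqrt π)
  have l2 := (herfc.tendsto.comp hsb0).const_mul
    ((Real.sqrt (0:ℝ) * Real.sqrt b - 1 / 2) * Real.exp (2 * (Real.sqrt (0:ℝ) * Real.sqrt b)))
  have l3 := (herfc.tendsto.comp (show Tendsto (fun x : ℝ => -(Real.sqrt b / Real.sqrt x)) atTop (𝓝 0) by simpa using hsb0.neg)).const_mul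
    ((Real.sqrt (0:ℝ) * Real.sqrt b + 1 / 2) * Real.exp (-(2 * (Real.sqrt (0:ℝ) * Real.sqrt b))))
  have htot := (l1.add l2).add l3
  rw [myErf_zero] at l2 l3 htot
  have : Tendsto (FF 0 b) atTop (𝓝 (2 * Real.sqrt b / Real.sqrt π * 0 +
      (Real.sqrt (0:ℝ) * Real.sqrt b - 1 / 2) * Real.exp (2 * (Real.sqrt (0:ℝ) * Real.sqrt b)) * 0 +
      (Real.sqrt (0:ℝ) * Real.sqrt b + 1 / 2) * Real.exp (-(2 * (Real.sqrt (0:ℝ) * Real.sqrt b))) * 0)) := by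
    refine htot.congr fun x => ?_
    unfold FF
    simp [Real.sqrt_zero, Function.comp]
  simpa using this

lemma FF_tendsto_nhdsGT {a b : ℝ} (ha : 0 ≤ a) (hb : 0 < b) :
    Tendsto (FF a b) (𝓝[>] (0:ℝ))
      (𝓝 ((Real.sqrt a * Real.sqrt b - 1 / 2) * Real.exp (2 * (Real.sqrt a * Real.sqrt b))
        - (Real.sqrt a * Real.sqrt b + 1 / 2) * Real.exp (-(2 * (Real.sqrt a * Real.sqrt b))))) := by
  have hinv : Tendsto (fun x : ℝ => x⁻¹) (𝓝[>] (0:ℝ)) atTop := tendsto_inv_nhdsGT_zero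
  -- term 1
  have t1 : Tendsto (fun x : ℝ => Real.exp (-(a * x + b / x)) / Real.sqrt x) (𝓝[>] (0:ℝ)) (𝓝 0) := by
    have h1 : Tendsto (fun x : ℝ => Real.exp (-(a * x))) (𝓝[>] (0:ℝ)) (𝓝 1) := by
      have hc : Continuous fun x : ℝ => Real.exp (-(a * x)) := by continuity
      have := (hc.tendsto 0).mono_left (nhdsWithin_le_nhds (s := Ioi (0:ℝ)))
      simpa using this
    have h2 : Tendsto (fun x : ℝ => (x⁻¹) ^ (1/2 : ℝ) * Real.exp (-b * x⁻¹)) (𝓝[>] (0:ℝ)) (𝓝 0) :=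
      (tendsto_rpow_mul_exp_neg_mul_atTop_nhds_zero (1/2) b hb).comp hinv
    have := h1.mul h2
    rw [one_mul] at this
    refine this.congr' ?_
    filter_upwards [self_mem_nhdsWithin] with x (hx : 0 < x)
    rw [← Real.sqrt_eq_rpow, Real.sqrt_inv]
    have harg : -(a * x + b / x) = -(a * x) + -(b * x⁻¹) := by ring
    rw [harg, Real.exp_add, div_eq_mul_inv]
    ring
  -- sqrt into nhdsWithin
  have hsqrt : Tendsto Real.sqrt (𝓝[>] (0:ℝ)) (𝓝[>] (0:ℝ)) := by
    rw [tendsto_nhdsWithin_iff]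
    constructor
    · have := (Real.continuous_sqrt.tendsto 0).mono_left (nhdsWithin_le_nhds (s := Ioi (0:ℝ)))
      simpa using this
    · filter_upwards [self_mem_nhdsWithin] with x (hx : 0 < x)
      exact Real.sqrt_pos.2 hx
  have hsinv : Tendsto (fun x : ℝ => (Real.sqrt x)⁻¹) (𝓝[>] (0:ℝ)) atTop :=
    tendsto_inv_nhdsGT_zero.comp hsqrt
  have s1 : Tendsto (fun x : ℝ => Real.sqrt a * Real.sqrt x) (𝓝[>] (0:ℝ)) (𝓝 0) := by
    have hc : Continuous fun x : ℝ => Real.sqrt a * Real.sqrt x :=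
      continuous_const.mul Real.continuous_sqrt
    have := (hc.tendsto 0).mono_left (nhdsWithin_le_nhds (s := Ioi (0:ℝ)))
    simpa using this
  have s2 : Tendsto (fun x : ℝ => Real.sqrt b / Real.sqrt x) (𝓝[>] (0:ℝ)) atTop := by
    have := hsinv.const_mul_atTop (Real.sqrt_pos.2 hb)
    refine this.congr fun x => ?_
    rw [div_eq_mul_inv]
  have hup : Tendsto (fun x : ℝ => Real.sqrt a * Real.sqrt x + Real.sqrt b / Real.sqrt x)
      (𝓝[>] (0:ℝ)) atTop := s1.add_atTop s2
  have hum : Tendsto (fun x : ℝ => Real.sqrt a * Real.sqrt x - Real.sqrt b / Real.sqrt x)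
      (𝓝[>] (0:ℝ)) atBot := by
    have := s1.add_atBot (tendsto_neg_atTop_atBot.comp s2)
    refine this.congr fun x => ?_
    simp [sub_eq_add_neg, Function.comp]
  have l1 := t1.const_mul (2 * Real.sqrt b / Real.sqrt π)
  have l2 := (myErf_tendsto_atTop.comp hup).const_mul
    ((Real.sqrt a * Real.sqrt b - 1 / 2) * Real.exp (2 * (Real.sqrt a * Real.sqrt b)))
  have l3 := (myErf_tendsto_atBot.comp hum).const_mul
    ((Real.sqrt a * Real.sqrt b + 1 / 2) * Real.exp (-(2 * (Real.sqrt a * Real.sqrt b))))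
  have htot := (l1.add l2).add l3
  unfold FF
  convert htot using 2 <;> simp only [Function.comp_apply, mul_one, mul_zero, zero_add] <;> ring

noncomputable def FFc (a b x : ℝ) : ℝ :=
  if x ≤ 0 then
    (Real.sqrt a * Real.sqrt b - 1 / 2) * Real.exp (2 * (Real.sqrt a * Real.sqrt b))
      - (Real.sqrt a * Real.sqrt b + 1 / 2) * Real.exp (-(2 * (Real.sqrt a * Real.sqrt b)))
  else FF a b x

lemma key_integral {a b L : ℝ} (ha : 0 ≤ a) (hb : 0 < b)
    (htop : Tendsto (FF a b) atTop (𝓝 L)) :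
    ∫ x in Ioi (0:ℝ), 2 * b * Real.sqrt b / Real.sqrt π *
        (Real.exp (-(a * x + b / x)) / (x ^ 2 * Real.sqrt x))
      = L - ((Real.sqrt a * Real.sqrt b - 1 / 2) * Real.exp (2 * (Real.sqrt a * Real.sqrt b))
        - (Real.sqrt a * Real.sqrt b + 1 / 2) * Real.exp (-(2 * (Real.sqrt a * Real.sqrt b)))) := by
  have heq : ∀ᶠ x in 𝓝[>] (0:ℝ), FFc a b x = FF a b x := by
    filter_upwards [self_mem_nhdsWithin] with x (hx : 0 < x)
    simp [FFc, not_le.2 hx]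
  have hcont : ContinuousWithinAt (FFc a b) (Ici 0) 0 := by
    rw [← continuousWithinAt_Ioi_iff_Ici]
    have h0 : FFc a b 0 = _ := if_pos le_rfl
    unfold ContinuousWithinAt
    rw [h0]
    exact (FF_tendsto_nhdsGT ha hb).congr' (heq.mono fun x hx => hx.symm)
  have hderiv : ∀ x ∈ Ioi (0:ℝ), HasDerivAt (FFc a b)
      (2 * b * Real.sqrt b / Real.sqrt π *
        (Real.exp (-(a * x + b / x)) / (x ^ 2 * Real.sqrt x))) x := by
    intro x hx
    refine (FF_hasDerivAt ha hb.le hx).congr_of_eventuallyEq ?_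
    filter_upwards [isOpen_Ioi.mem_nhds hx] with y (hy : 0 < y)
    simp [FFc, not_le.2 hy]
  have hpos : ∀ x ∈ Ioi (0:ℝ), 0 ≤ 2 * b * Real.sqrt b / Real.sqrt π *
      (Real.exp (-(a * x + b / x)) / (x ^ 2 * Real.sqrt x)) := by
    intro x hx
    have hx' : (0:ℝ) < x := hx
    have : (0:ℝ) < π := Real.pi_pos
    positivity
  have htop' : Tendsto (FFc a b) atTop (𝓝 L) := by
    refine htop.congr' ?_
    filter_upwards [eventually_gt_atTop (0:ℝ)] with x hx
    simp [FFc, not_le.2 hx]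
  have := integral_Ioi_of_hasDerivAt_of_nonneg hcont hderiv hpos htop'
  rw [this]
  congr 1
  exact if_pos le_rfl


/-- The upper incomplete gamma function `Γ(ρ, x) = ∫_x^∞ e^{-w} w^{ρ-1} dw`. -/
noncomputable def uGamma (ρ x : ℝ) : ℝ := ∫ w in Set.Ioi x, Real.exp (-w) * w ^ (ρ - 1)

/-- Density of the generalized stable law with `α = 1/2`, `ρ = 2` and scale `c`. -/
noncomputable def genStableHalfTwo (c x : ℝ) : ℝ :=
  c ^ 3 / (4 * x * Real.sqrt (Real.pi * x ^ 3)) * Real.exp (-c ^ 2 / (4 * x))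

lemma uGamma_two {y : ℝ} (hy : 0 < y) : uGamma 2 y = Real.exp (-y) * (1 + y) := by
  unfold uGamma
  have h1 : ∀ w : ℝ, Real.exp (-w) * w ^ ((2:ℝ) - 1) = Real.exp (-w) * w := by
    intro w; norm_num
  simp only [h1]
  have hderiv : ∀ w ∈ Ioi y, HasDerivAt (fun w : ℝ => -(Real.exp (-w) * (1 + w)))
      (Real.exp (-w) * w) w := by
    intro w _
    have hE : HasDerivAt (fun w : ℝ => Real.exp (-w)) (Real.exp (-w) * (-1)) w := by
      simpa using ((hasDerivAt_id w).neg).exp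
    have := (hE.fun_mul ((hasDerivAt_id w).const_add 1)).fun_neg
    convert this using 1
    case e'_4 => rfl
    case e'_5 => rfl
    case e'_9 => simp only [id_eq]; ring
    simp only [id]
  have hpos : ∀ w ∈ Ioi y, 0 ≤ Real.exp (-w) * w := by
    intro w hw
    have : 0 < w := hy.trans hw
    positivity
  have htop : Tendsto (fun w : ℝ => -(Real.exp (-w) * (1 + w))) atTop (𝓝 0) := by
    have h2 : Tendsto (fun w : ℝ => w ^ (1:ℝ) * Real.exp (-1 * w)) atTop (𝓝 0) :=
      tendsto_rpow_mul_exp_neg_mul_atTop_nhds_zero 1 1 one_pos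
    have h3 : Tendsto (fun w : ℝ => Real.exp (-w)) atTop (𝓝 0) := Real.tendsto_exp_neg_atTop_nhds_zero
    have := ((h3.add h2).neg)
    rw [show -((0:ℝ) + 0) = 0 by ring] at this
    refine this.congr' ?_
    filter_upwards [eventually_gt_atTop (0:ℝ)] with w hw
    rw [Real.rpow_one]
    ring_nf
  have hcont : ContinuousWithinAt (fun w : ℝ => -(Real.exp (-w) * (1 + w))) (Ici y) y := by
    have : Continuous fun w : ℝ => -(Real.exp (-w) * (1 + w)) := by continuity
    exact this.continuousWithinAt
  have := integral_Ioi_of_hasDerivAt_of_nonneg hcont hderiv hpos htop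
  rw [this]
  ring

theorem genStableHalfTwo_density_and_laplace (c : ℝ) (hc : 0 < c) :
    (∀ x : ℝ, 0 < x → 0 ≤ genStableHalfTwo c x) ∧
    (∫ x in Set.Ioi (0 : ℝ), genStableHalfTwo c x = 1) ∧
    ∀ η : ℝ, 0 < η →
      (∫ x in Set.Ioi (0 : ℝ), Real.exp (-η * x) * genStableHalfTwo c x
          = Real.exp (-(c * Real.sqrt η)) * (1 + c * Real.sqrt η)) ∧
      (∫ x in Set.Ioi (0 : ℝ), Real.exp (-η * x) * genStableHalfTwo c x
          = uGamma 2 (c * Real.sqrt η) / Real.Gamma 2) := by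
  have hb : (0:ℝ) < c ^ 2 / 4 := by positivity
  have hsb : Real.sqrt (c ^ 2 / 4) = c / 2 := by
    rw [show c ^ 2 / 4 = (c / 2) ^ 2 by ring, Real.sqrt_sq (by positivity)]
  have hpi : (0:ℝ) < π := Real.pi_pos
  -- pointwise identity on Ioi 0
  have hpt : ∀ a : ℝ, ∀ x ∈ Ioi (0:ℝ), Real.exp (-a * x) * genStableHalfTwo c x
      = 2 * (c ^ 2 / 4) * Real.sqrt (c ^ 2 / 4) / Real.sqrt π *
        (Real.exp (-(a * x + (c ^ 2 / 4) / x)) / (x ^ 2 * Real.sqrt x)) := by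
    intro a x hx
    have hx' : (0:ℝ) < x := hx
    have hsx : Real.sqrt (π * x ^ 3) = Real.sqrt π * (x * Real.sqrt x) := by
      rw [Real.sqrt_mul hpi.le, show x ^ 3 = x ^ 2 * x by ring,
        Real.sqrt_mul (sq_nonneg x), Real.sqrt_sq hx'.le]
    unfold genStableHalfTwo
    rw [hsb, hsx, show -(a * x + (c ^ 2 / 4) / x) = (-a * x) + (-c ^ 2 / (4 * x)) by ring,
      Real.exp_add]
    have hsx0 : Real.sqrt x ≠ 0 := (Real.sqrt_pos.2 hx').ne'
    have hπ0 : Real.sqrt π ≠ 0 := (Real.sqrt_pos.2 hpi).ne'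
    field_simp
  refine ⟨?_, ?_, ?_⟩
  · intro x hx
    unfold genStableHalfTwo
    positivity
  · have h0 : ∀ x ∈ Ioi (0:ℝ), genStableHalfTwo c x
        = 2 * (c ^ 2 / 4) * Real.sqrt (c ^ 2 / 4) / Real.sqrt π *
          (Real.exp (-((0:ℝ) * x + (c ^ 2 / 4) / x)) / (x ^ 2 * Real.sqrt x)) := by
      intro x hx
      have := hpt 0 x hx
      simpa using this
    rw [setIntegral_congr_fun measurableSet_Ioi h0,
      key_integral le_rfl hb (FF0_tendsto_atTop hb.le)]
    norm_num
  · intro η hη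
    have hseta : Real.sqrt η * Real.sqrt (c ^ 2 / 4) = c * Real.sqrt η / 2 := by
      rw [hsb]; ring
    have hmain : ∫ x in Set.Ioi (0 : ℝ), Real.exp (-η * x) * genStableHalfTwo c x
        = Real.exp (-(c * Real.sqrt η)) * (1 + c * Real.sqrt η) := by
      rw [setIntegral_congr_fun measurableSet_Ioi (hpt η),
        key_integral hη.le hb (FF_tendsto_atTop hη hb)]
      rw [hseta]
      have : 2 * (c * Real.sqrt η / 2) = c * Real.sqrt η := by ring
      rw [this]
      ring
    refine ⟨hmain, ?_⟩
    rw [hmain, uGamma_two (by positivity : (0:ℝ) < c * Real.sqrt η), Real.Gamma_two, div_one]
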